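/- Let Z₁,…,Z_n be mean-zero L-subgaussian random variables (not necessarily independent) with max_i ‖Z_i‖_{L₂} ≤ M. Then E (Σ_{i=1}^k (Z_i*)²)^{1/2} ≤ c L M √(k log(en/k)) for an absolute constant c, where (Z_i*) denotes the non-increasing rearrangement of (|Z_i|). -/

import Mathlib

open MeasureTheory Real Finset

/-- Sum of squares of the k largest-magnitude entries of v, expressed as the
maximum of ∑_{i ∈ I} v i ² over subsets I of cardinality k. -/
noncomputable def topkSq {n : ℕ} (k : ℕ) (v : Fin n → ℝ) : ℝ :=
  sSup {c : ℝ | ∃ I : Finset (Fin n), I.card = k ∧ c = ∑ i ∈ I, v i ^ 2}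

/-- Hölder step: sum of squares over a set of size `m` is controlled by the
`ℓ_{2q}` norm of the whole vector. -/
lemma holder_aux {n : ℕ} (v : Fin n → ℝ) (I : Finset (Fin n)) {q : ℝ} (hq : 1 ≤ q) :
    ∑ i ∈ I, v i ^ 2 ≤
      (I.card : ℝ) ^ (1 - 1/q) * (∑ i : Fin n, |v i| ^ (2*q)) ^ (1/q) := by
  have hSnn : (0:ℝ) ≤ ∑ i : Fin n, |v i| ^ (2*q) :=
    Finset.sum_nonneg fun i _ => Real.rpow_nonneg (abs_nonneg _) _
  have hsub : ∑ i ∈ I, |v i| ^ (2*q) ≤ ∑ i : Fin n, |v i| ^ (2*q) :=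
    Finset.sum_le_sum_of_subset_of_nonneg (Finset.subset_univ I)
      (fun i _ _ => Real.rpow_nonneg (abs_nonneg _) _)
  have habs : ∀ i, |v i ^ 2| ^ q = |v i| ^ (2*q) := by
    intro i
    rw [abs_pow, ← Real.rpow_natCast |v i| 2, ← Real.rpow_mul (abs_nonneg _)]
    norm_num
  rcases eq_or_lt_of_le hq with h1 | h1
  · -- q = 1
    subst h1
    simp only [one_div, inv_one, sub_self, Real.rpow_zero, one_mul, Real.rpow_one]
    calc ∑ i ∈ I, v i ^ 2 = ∑ i ∈ I, |v i| ^ (2*(1:ℝ)) := by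
          refine Finset.sum_congr rfl fun i _ => ?_
          rw [← habs i, Real.rpow_one, abs_pow, sq_abs]
      _ ≤ _ := hsub
  · -- q > 1
    have hpq : Real.HolderConjugate q (Real.conjExponent q) :=
      Real.HolderConjugate.conjExponent h1
    have := Real.inner_le_Lp_mul_Lq I (fun i => v i ^ 2) (fun _ => (1:ℝ)) hpq
    simp only [mul_one, abs_one, Real.one_rpow, Finset.sum_const, nsmul_eq_mul] at this
    have hconj : 1 / Real.conjExponent q = 1 - 1/q := by
      have := hpq.inv_add_inv_eq_one
      field_simp at this ⊢
      linarith
    calc ∑ i ∈ I, v i ^ 2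
        ≤ (∑ i ∈ I, |v i ^ 2| ^ q) ^ (1/q) * ((I.card : ℝ)) ^ (1 / Real.conjExponent q) :=
          this
      _ = (∑ i ∈ I, |v i| ^ (2*q)) ^ (1/q) * ((I.card : ℝ)) ^ (1 - 1/q) := by
          rw [hconj]
          congr 2
          exact Finset.sum_congr rfl fun i _ => habs i
      _ ≤ (∑ i : Fin n, |v i| ^ (2*q)) ^ (1/q) * ((I.card : ℝ)) ^ (1 - 1/q) := by
          refine mul_le_mul_of_nonneg_right ?_ (Real.rpow_nonneg (Nat.cast_nonneg _) _)
          exact Real.rpow_le_rpow (Finset.sum_nonneg fun i _ =>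
            Real.rpow_nonneg (abs_nonneg _) _) hsub (by positivity)
      _ = _ := mul_comm _ _

lemma topk_bound {n : ℕ} (k : ℕ) (v : Fin n → ℝ) {q : ℝ} (hq : 1 ≤ q) :
    Real.sqrt (topkSq k v) ≤
      (k : ℝ) ^ ((1:ℝ)/2 - 1/(2*q)) * (∑ i : Fin n, |v i| ^ (2*q)) ^ (1/(2*q)) := by
  have hq0 : (0:ℝ) < q := lt_of_lt_of_le one_pos hq
  have hSnn : (0:ℝ) ≤ ∑ i : Fin n, |v i| ^ (2*q) :=
    Finset.sum_nonneg fun i _ => Real.rpow_nonneg (abs_nonneg _) _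
  have hB : (0:ℝ) ≤ (k : ℝ) ^ (1 - 1/q) * (∑ i : Fin n, |v i| ^ (2*q)) ^ (1/q) := by
    positivity
  have h1 : topkSq k v ≤ (k : ℝ) ^ (1 - 1/q) * (∑ i : Fin n, |v i| ^ (2*q)) ^ (1/q) := by
    refine Real.sSup_le ?_ hB
    rintro x ⟨I, hI, rfl⟩
    simpa [hI] using holder_aux v I hq
  calc Real.sqrt (topkSq k v)
      ≤ Real.sqrt ((k : ℝ) ^ (1 - 1/q) * (∑ i : Fin n, |v i| ^ (2*q)) ^ (1/q)) :=
        Real.sqrt_le_sqrt h1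
    _ = _ := by
        have e1 : (1 - 1/q) * ((1:ℝ)/2) = (1:ℝ)/2 - 1/(2*q) := by
          have : q ≠ 0 := hq0.ne'
          field_simp
        have e2 : (1/q) * ((1:ℝ)/2) = 1/(2*q) := by
          rw [div_mul_div_comm, one_mul, mul_comm]
        rw [Real.sqrt_eq_rpow, Real.mul_rpow (by positivity) (by positivity),
          ← Real.rpow_mul (by positivity), ← Real.rpow_mul hSnn, e1, e2]

lemma jensen_rpow {Ω : Type} [MeasurableSpace Ω] (μ : Measure Ω) [IsProbabilityMeasure μ]
    (g : Ω → ℝ) (hg : Measurable g) (hnn : ∀ ω, 0 ≤ g ω) (hint : Integrable g μ)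
    {r : ℝ} (hr0 : 0 < r) (hr1 : r ≤ 1) :
    ∫ ω, (g ω) ^ r ∂μ ≤ (∫ ω, g ω ∂μ) ^ r := by
  have hconc : ConcaveOn ℝ (Set.Ici 0) (fun x : ℝ => x ^ r) :=
    Real.concaveOn_rpow hr0.le hr1
  have hcont : ContinuousOn (fun x : ℝ => x ^ r) (Set.Ici 0) :=
    (Real.continuous_rpow_const hr0.le).continuousOn
  have hgi : Integrable ((fun x : ℝ => x ^ r) ∘ g) μ := by
    refine Integrable.mono (by exact (integrable_const (1:ℝ)).add hint) ?_ ?_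
    · exact (((Real.continuous_rpow_const (by positivity)).measurable.comp
        hg).aestronglyMeasurable)
    · filter_upwards with ω
      simp only [Function.comp_apply, Real.norm_eq_abs]
      rw [abs_of_nonneg (Real.rpow_nonneg (hnn ω) _)]
      rcases le_total (g ω) 1 with h | h
      · calc g ω ^ r ≤ 1 := Real.rpow_le_one (hnn ω) h hr0.le
          _ ≤ |1 + g ω| := by
            rw [abs_of_nonneg (by linarith [hnn ω])]; linarith [hnn ω]
      · calc g ω ^ r ≤ g ω ^ (1:ℝ) := Real.rpow_le_rpow_of_exponent_le h hr1
          _ = g ω := Real.rpow_one _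
          _ ≤ |1 + g ω| := by
            rw [abs_of_nonneg (by linarith [hnn ω])]; linarith
  exact ConcaveOn.le_map_integral hconc hcont isClosed_Ici
    (Filter.Eventually.of_forall fun ω => hnn ω) hint hgi

/-- Expectation bound for the ℓ₂ norm of the k largest of n mean-zero
L-subgaussian random variables (not necessarily independent). -/
theorem stmt6 :
    ∃ c > (0 : ℝ),
      ∀ (n k : ℕ), 1 ≤ k → k ≤ n →
      ∀ (L M : ℝ), 1 ≤ L → 0 < M →
      ∀ (Ω : Type) (_ : MeasurableSpace Ω) (μ : Measure Ω) (_ : IsProbabilityMeasure μ)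
        (Z : Fin n → Ω → ℝ),
        (∀ i, Measurable (Z i)) →
        (∀ i, ∀ p : ℝ, 1 ≤ p → Integrable (fun ω => |Z i ω| ^ p) μ) →
        (∀ i, (∫ ω, Z i ω ∂μ) = 0) →
        (∀ i, ∀ p : ℝ, 1 ≤ p →
          (∫ ω, |Z i ω| ^ p ∂μ) ^ (1/p) ≤
            L * Real.sqrt p * (∫ ω, Z i ω ^ 2 ∂μ) ^ ((1:ℝ)/2)) →
        (∀ i, (∫ ω, Z i ω ^ 2 ∂μ) ^ ((1:ℝ)/2) ≤ M) →
        Integrable (fun ω => Real.sqrt (topkSq k (fun i => Z i ω))) μ →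
        (∫ ω, Real.sqrt (topkSq k (fun i => Z i ω)) ∂μ) ≤
          c * L * M * Real.sqrt (k * Real.log (Real.exp 1 * n / k)) := by
  refine ⟨3, by norm_num, ?_⟩
  intro n k hk hkn L M hL hM Ω mΩ μ hprob Z hmeas hInt hmean hmom hM2 hIntTop
  have hk0 : (0:ℝ) < (k:ℝ) := by exact_mod_cast hk
  have hn0 : (0:ℝ) < (n:ℝ) := lt_of_lt_of_le hk0 (by exact_mod_cast hkn)
  set q : ℝ := Real.log (Real.exp 1 * n / k) with hq_def
  have hratio : (1:ℝ) ≤ (n:ℝ)/(k:ℝ) := (one_le_div hk0).mpr (by exact_mod_cast hkn)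
  have hlog_eq : q = 1 + Real.log ((n:ℝ)/(k:ℝ)) := by
    rw [hq_def, show Real.exp 1 * (n:ℝ) / (k:ℝ) = Real.exp 1 * ((n:ℝ)/(k:ℝ)) by ring,
      Real.log_mul (Real.exp_ne_zero 1) (by positivity), Real.log_exp]
  have hlognn : 0 ≤ Real.log ((n:ℝ)/(k:ℝ)) := Real.log_nonneg hratio
  have hq1 : (1:ℝ) ≤ q := by rw [hlog_eq]; linarith
  have hq0 : (0:ℝ) < q := lt_of_lt_of_le one_pos hq1
  set p : ℝ := 2*q with hp_def
  have hp1 : (1:ℝ) ≤ p := by rw [hp_def]; linarith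
  have hp0 : (0:ℝ) < p := lt_of_lt_of_le one_pos hp1
  set g : Ω → ℝ := fun ω => ∑ i : Fin n, |Z i ω| ^ p with hg_def
  have hgnn : ∀ ω, 0 ≤ g ω := fun ω =>
    Finset.sum_nonneg fun i _ => Real.rpow_nonneg (abs_nonneg _) _
  have hgmeas : Measurable g :=
    Finset.measurable_sum _ fun i _ =>
      (Real.continuous_rpow_const hp0.le).measurable.comp (hmeas i).abs
  have hgint : Integrable g μ :=
    integrable_finset_sum _ fun i _ => hInt i p hp1
  set B : ℝ := L * Real.sqrt p * M with hB_def
  have hBnn : 0 ≤ B := by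
    have : 0 ≤ Real.sqrt p := Real.sqrt_nonneg _
    positivity
  -- moment bound for each coordinate
  have hmom' : ∀ i, (∫ ω, |Z i ω| ^ p ∂μ) ≤ B ^ p := by
    intro i
    have hint_nn : 0 ≤ ∫ ω, |Z i ω| ^ p ∂μ :=
      integral_nonneg fun ω => Real.rpow_nonneg (abs_nonneg _) _
    have h1 : (∫ ω, |Z i ω| ^ p ∂μ) ^ (1/p) ≤ B := by
      refine (hmom i p hp1).trans ?_
      rw [hB_def]
      have h2nn : 0 ≤ (∫ ω, Z i ω ^ 2 ∂μ) ^ ((1:ℝ)/2) :=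
        Real.rpow_nonneg (integral_nonneg fun ω => sq_nonneg _) _
      have : 0 ≤ L * Real.sqrt p := by positivity
      exact mul_le_mul_of_nonneg_left (hM2 i) this
    calc (∫ ω, |Z i ω| ^ p ∂μ)
        = ((∫ ω, |Z i ω| ^ p ∂μ) ^ (1/p)) ^ p := by
          rw [← Real.rpow_mul hint_nn, one_div, inv_mul_cancel₀ hp0.ne', Real.rpow_one]
      _ ≤ B ^ p := Real.rpow_le_rpow (Real.rpow_nonneg hint_nn _) h1 hp0.le
  have hIg : (∫ ω, g ω ∂μ) ≤ (n:ℝ) * B ^ p := by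
    rw [hg_def]
    rw [integral_finset_sum _ fun i _ => hInt i p hp1]
    calc ∑ i : Fin n, ∫ ω, |Z i ω| ^ p ∂μ
        ≤ ∑ _i : Fin n, B ^ p := Finset.sum_le_sum fun i _ => hmom' i
      _ = (n:ℝ) * B ^ p := by
        rw [Finset.sum_const, Finset.card_univ, Fintype.card_fin, nsmul_eq_mul]
  have hIgnn : 0 ≤ ∫ ω, g ω ∂μ := integral_nonneg hgnn
  -- Jensen
  have hjensen : ∫ ω, (g ω) ^ (1/p) ∂μ ≤ (∫ ω, g ω ∂μ) ^ (1/p) :=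
    jensen_rpow μ g hgmeas hgnn hgint (by positivity)
      (by rw [div_le_one hp0]; linarith)
  -- integrability of the dominating function
  have hgr_int : Integrable (fun ω => (g ω) ^ (1/p)) μ := by
    refine Integrable.mono ((integrable_const (1:ℝ)).add hgint)
      (((Real.continuous_rpow_const (by positivity)).measurable.comp
        hgmeas).aestronglyMeasurable) ?_
    filter_upwards with ω
    simp only [Real.norm_eq_abs]
    rw [abs_of_nonneg (Real.rpow_nonneg (hgnn ω) _)]
    have hr0 : (0:ℝ) < 1/p := by positivity
    have hr1 : (1:ℝ)/p ≤ 1 := by rw [div_le_one hp0]; linarith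
    rcases le_total (g ω) 1 with h | h
    · calc g ω ^ (1/p) ≤ 1 := Real.rpow_le_one (hgnn ω) h hr0.le
        _ ≤ |1 + g ω| := by rw [abs_of_nonneg (by linarith [hgnn ω])]; linarith [hgnn ω]
    · calc g ω ^ (1/p) ≤ g ω ^ (1:ℝ) := Real.rpow_le_rpow_of_exponent_le h hr1
        _ = g ω := Real.rpow_one _
        _ ≤ |1 + g ω| := by rw [abs_of_nonneg (by linarith [hgnn ω])]; linarith
  set C1 : ℝ := (k:ℝ) ^ ((1:ℝ)/2 - 1/p) with hC1_def
  have hC1nn : 0 ≤ C1 := Real.rpow_nonneg hk0.le _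
  -- step 1: pointwise bound and integral mono
  have hstep1 : (∫ ω, Real.sqrt (topkSq k (fun i => Z i ω)) ∂μ) ≤
      C1 * ∫ ω, (g ω) ^ (1/p) ∂μ := by
    rw [← integral_const_mul]
    refine integral_mono hIntTop (hgr_int.const_mul C1) ?_
    intro ω
    have := topk_bound k (fun i => Z i ω) hq1
    simpa [hC1_def, hg_def, hp_def] using this
  -- step 2+3
  have hstep2 : C1 * ∫ ω, (g ω) ^ (1/p) ∂μ ≤ C1 * ((n:ℝ) * B ^ p) ^ (1/p) := by
    refine mul_le_mul_of_nonneg_left ?_ hC1nn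
    refine hjensen.trans ?_
    exact Real.rpow_le_rpow hIgnn hIg (by positivity)
  have hBp : ((n:ℝ) * B ^ p) ^ (1/p) = (n:ℝ) ^ (1/p) * B := by
    rw [Real.mul_rpow hn0.le (Real.rpow_nonneg hBnn _), ← Real.rpow_mul hBnn,
      mul_one_div, div_self hp0.ne', Real.rpow_one]
  -- key arithmetic: C1 * n^(1/p) ≤ √k * 2
  have hkey : C1 * (n:ℝ) ^ (1/p) ≤ Real.sqrt (k:ℝ) * 2 := by
    have h1 : (n:ℝ) ^ (1/p) = (k:ℝ) ^ (1/p) * ((n:ℝ)/(k:ℝ)) ^ (1/p) := by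
      rw [← Real.mul_rpow hk0.le (by positivity)]
      congr 1
      field_simp
    have h2 : C1 * (k:ℝ) ^ (1/p) = Real.sqrt (k:ℝ) := by
      rw [hC1_def, ← Real.rpow_add hk0, sub_add_cancel, ← Real.sqrt_eq_rpow]
    have h3 : ((n:ℝ)/(k:ℝ)) ^ (1/p) ≤ 2 := by
      rcases eq_or_lt_of_le hratio with hr | hr
      · rw [← hr, Real.one_rpow]; norm_num
      · have hpos : (0:ℝ) < (n:ℝ)/(k:ℝ) := by positivity
        rw [Real.rpow_def_of_pos hpos]
        have hle : Real.log ((n:ℝ)/(k:ℝ)) * (1/p) ≤ 1/2 := by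
          have hlq : Real.log ((n:ℝ)/(k:ℝ)) ≤ q := by rw [hlog_eq]; linarith
          have : Real.log ((n:ℝ)/(k:ℝ)) * (1/p) ≤ q * (1/p) :=
            mul_le_mul_of_nonneg_right hlq (by positivity)
          calc Real.log ((n:ℝ)/(k:ℝ)) * (1/p) ≤ q * (1/p) := this
            _ = 1/2 := by rw [hp_def]; field_simp
        calc Real.exp (Real.log ((n:ℝ)/(k:ℝ)) * (1/p)) ≤ Real.exp (1/2) :=
              Real.exp_le_exp.mpr hle
          _ ≤ 2 := by
              nlinarith [Real.exp_one_lt_d9, Real.exp_pos (1/2 : ℝ),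
                Real.exp_add (1/2 : ℝ) (1/2 : ℝ), Real.exp_pos (1:ℝ)]
    calc C1 * (n:ℝ) ^ (1/p)
        = (C1 * (k:ℝ) ^ (1/p)) * ((n:ℝ)/(k:ℝ)) ^ (1/p) := by rw [h1]; ring
      _ = Real.sqrt (k:ℝ) * ((n:ℝ)/(k:ℝ)) ^ (1/p) := by rw [h2]
      _ ≤ Real.sqrt (k:ℝ) * 2 := by
          exact mul_le_mul_of_nonneg_left h3 (Real.sqrt_nonneg _)
  -- √p = √2 * √q
  have hsqrtp : Real.sqrt p = Real.sqrt 2 * Real.sqrt q := by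
    rw [hp_def, Real.sqrt_mul (by norm_num : (0:ℝ) ≤ 2)]
  have hsqkq : Real.sqrt ((k:ℝ) * q) = Real.sqrt (k:ℝ) * Real.sqrt q :=
    Real.sqrt_mul hk0.le q
  have hfinal : Real.sqrt (k:ℝ) * 2 * B ≤ 3 * L * M * Real.sqrt ((k:ℝ) * q) := by
    rw [hB_def, hsqrtp, hsqkq]
    have hs2 : Real.sqrt 2 ≤ (3:ℝ)/2 := by
      rw [show (3:ℝ)/2 = Real.sqrt ((3/2)^2) by rw [Real.sqrt_sq (by norm_num)]]
      exact Real.sqrt_le_sqrt (by norm_num)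
    have hsknn : 0 ≤ Real.sqrt (k:ℝ) := Real.sqrt_nonneg _
    have hsqnn : 0 ≤ Real.sqrt q := Real.sqrt_nonneg _
    have hx : 0 ≤ L * M * (Real.sqrt (k:ℝ) * Real.sqrt q) := by positivity
    calc Real.sqrt (k:ℝ) * 2 * (L * (Real.sqrt 2 * Real.sqrt q) * M)
        = (2 * Real.sqrt 2) * (L * M * (Real.sqrt (k:ℝ) * Real.sqrt q)) := by ring
      _ ≤ 3 * (L * M * (Real.sqrt (k:ℝ) * Real.sqrt q)) := by
          refine mul_le_mul_of_nonneg_right (by linarith) hx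
      _ = 3 * L * M * (Real.sqrt (k:ℝ) * Real.sqrt q) := by ring
  calc (∫ ω, Real.sqrt (topkSq k (fun i => Z i ω)) ∂μ)
      ≤ C1 * ∫ ω, (g ω) ^ (1/p) ∂μ := hstep1
    _ ≤ C1 * ((n:ℝ) * B ^ p) ^ (1/p) := hstep2
    _ = C1 * (n:ℝ) ^ (1/p) * B := by rw [hBp]; ring
    _ ≤ Real.sqrt (k:ℝ) * 2 * B := mul_le_mul_of_nonneg_right hkey hBnn
    _ ≤ 3 * L * M * Real.sqrt ((k:ℝ) * q) := hfinal
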